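/- Equality of feasible sets for the channel-distance SDP: Let X = ℂⁿ and Y = ℂᵐ. Define Q = {R ∈ Pos(Y⊗X) : R ≤ 1_Y ⊗ ρ for some density operator ρ ∈ D(X)} and R = {(1_Y ⊗ B*) P (1_Y ⊗ B) : B ∈ L(X), P ∈ Pos(Y⊗X), ‖B‖₂ = 1, P ≤ 1_{Y⊗X}}, where ‖B‖₂ = √Tr(B*B) is the Frobenius norm. Then Q = R. -/

import Mathlib

open Matrix
open scoped Kronecker ComplexOrder

noncomputable section

/-- The trace norm `‖A‖₁ = Tr √(A* A)`. -/
def traceNorm {m n : Type*} [Fintype m] [Fintype n] [DecidableEq n]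
    (A : Matrix m n ℂ) : ℝ :=
  (((Matrix.posSemidef_conjTranspose_mul_self A).1.eigenvectorUnitary : Matrix n n ℂ) *
      diagonal (((↑) : ℝ → ℂ) ∘ Real.sqrt ∘ (Matrix.posSemidef_conjTranspose_mul_self A).1.eigenvalues) *
      (star (Matrix.posSemidef_conjTranspose_mul_self A).1.eigenvectorUnitary :
        Matrix n n ℂ)).trace.re

/-- The spectral norm (operator norm w.r.t. Euclidean norms). -/
def specNorm {m n : Type*} [Fintype m] [Fintype n] [DecidableEq n]
    (A : Matrix m n ℂ) : ℝ :=
  ‖LinearMap.toContinuousLinearMap (Matrix.toEuclideanLin A)‖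

/-- The Frobenius norm `‖A‖₂ = √Tr(A*A)`. -/
def frobeniusNorm {m n : Type*} [Fintype m] [Fintype n] (A : Matrix m n ℂ) : ℝ :=
  Real.sqrt ((Aᴴ * A).trace.re)

/-- Partial trace over the first tensor factor. -/
def ptraceFst {y z : Type*} [Fintype y] (M : Matrix (y × z) (y × z) ℂ) : Matrix z z ℂ :=
  Matrix.of fun a b => ∑ i, M (i, a) (i, b)

/-- Partial trace over the second tensor factor. -/
def ptraceSnd {y z : Type*} [Fintype z] (M : Matrix (y × z) (y × z) ℂ) : Matrix y y ℂ :=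
  Matrix.of fun i j => ∑ a, M (i, a) (j, a)

/-- The super-operator `Φ ⊗ 1_{L(W)}`, for `Φ : L(X) → L(Y)` and `W` indexed by `k`. -/
def tensorId {n m : Type*} [Fintype n] [Fintype m] (k : Type*) [Fintype k]
    (Φ : Matrix n n ℂ →ₗ[ℂ] Matrix m m ℂ) :
    Matrix (n × k) (n × k) ℂ →ₗ[ℂ] Matrix (m × k) (m × k) ℂ where
  toFun M := Matrix.of fun p q => Φ (Matrix.of fun i j => M (i, p.2) (j, q.2)) p.1 q.1
  map_add' M N := by
    ext p q
    show Φ (Matrix.of fun i j => (M + N) (i, p.2) (j, q.2)) p.1 q.1 =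
      Φ (Matrix.of fun i j => M (i, p.2) (j, q.2)) p.1 q.1 +
        Φ (Matrix.of fun i j => N (i, p.2) (j, q.2)) p.1 q.1
    have h : (Matrix.of fun i j => (M + N) (i, p.2) (j, q.2)) =
        (Matrix.of fun i j => M (i, p.2) (j, q.2)) +
          (Matrix.of fun i j => N (i, p.2) (j, q.2)) := rfl
    rw [h, map_add]; rfl
  map_smul' c M := by
    ext p q
    show Φ (Matrix.of fun i j => (c • M) (i, p.2) (j, q.2)) p.1 q.1 =
      (c • Φ (Matrix.of fun i j => M (i, p.2) (j, q.2))) p.1 q.1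
    have h : (Matrix.of fun i j => (c • M) (i, p.2) (j, q.2)) =
        c • (Matrix.of fun i j => M (i, p.2) (j, q.2)) := rfl
    rw [h, _root_.map_smul]

/-- The trace norm induced on super-operators. -/
def inducedTraceNorm {a b : Type*} [Fintype a] [DecidableEq a] [Fintype b] [DecidableEq b]
    (Φ : Matrix a a ℂ →ₗ[ℂ] Matrix b b ℂ) : ℝ :=
  sSup {x : ℝ | ∃ X : Matrix a a ℂ, traceNorm X ≤ 1 ∧ x = traceNorm (Φ X)}

/-- The completely bounded trace norm (diamond norm):
`sup over k ≥ 1 of ‖Φ ⊗ 1_{L(ℂᵏ)}‖₁`. -/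
def diamondNorm {n m : Type*} [Fintype n] [DecidableEq n] [Fintype m] [DecidableEq m]
    (Φ : Matrix n n ℂ →ₗ[ℂ] Matrix m m ℂ) : ℝ :=
  ⨆ k : ℕ, inducedTraceNorm (tensorId (Fin (k + 1)) Φ)


/-- Choi–Jamiołkowski representation `J(Φ) = Σ_{i,j} Φ(E_{i,j}) ⊗ E_{i,j}`. -/
def choi {n m : Type*} [Fintype n] [DecidableEq n] [Fintype m]
    (Φ : Matrix n n ℂ →ₗ[ℂ] Matrix m m ℂ) : Matrix (m × n) (m × n) ℂ :=
  ∑ i : n, ∑ j : n, (Φ (Matrix.single i j 1)) ⊗ₖ (Matrix.single i j 1)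

/-- A quantum channel: a completely positive and trace-preserving super-operator. -/
def IsQuantumChannel {n m : Type*} [Fintype n] [Fintype m]
    (Φ : Matrix n n ℂ →ₗ[ℂ] Matrix m m ℂ) : Prop :=
  (∀ (k : ℕ) (P : Matrix (n × Fin k) (n × Fin k) ℂ), P.PosSemidef →
      (tensorId (Fin k) Φ P).PosSemidef) ∧
    ∀ X : Matrix n n ℂ, (Φ X).trace = X.trace

open Classical in
/-- Square root of a positive semidefinite matrix (junk value `0` otherwise). -/
def matSqrt {r : Type*} [Fintype r] [DecidableEq r] (P : Matrix r r ℂ) : Matrix r r ℂ :=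
  if h : P.PosSemidef then
    (h.1.eigenvectorUnitary : Matrix r r ℂ) * diagonal (((↑) : ℝ → ℂ) ∘ Real.sqrt ∘ h.1.eigenvalues) *
      (star h.1.eigenvectorUnitary : Matrix r r ℂ) else 0

/-- The fidelity `F(P,Q) = ‖√P √Q‖₁`. -/
def fidelity {r : Type*} [Fintype r] [DecidableEq r] (P Q : Matrix r r ℂ) : ℝ :=
  traceNorm (matSqrt P * matSqrt Q)

open scoped MatrixOrder in
def Matrix.PosSemidef.sqrt {r : Type*} [Fintype r] [DecidableEq r] {A : Matrix r r ℂ}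
    (_ : A.PosSemidef) : Matrix r r ℂ :=
  CFC.sqrt A

open scoped MatrixOrder in
lemma Matrix.PosSemidef.posSemidef_sqrt {r : Type*} [Fintype r] [DecidableEq r]
    {A : Matrix r r ℂ} (h : A.PosSemidef) : h.sqrt.PosSemidef :=
  (CFC.sqrt_nonneg A).posSemidef

open scoped MatrixOrder in
lemma Matrix.PosSemidef.sqrt_mul_self {r : Type*} [Fintype r] [DecidableEq r]
    {A : Matrix r r ℂ} (h : A.PosSemidef) : h.sqrt * h.sqrt = A :=
  CFC.sqrt_mul_sqrt_self A h.nonneg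

lemma kron_conjT {a b : Type*} [Fintype a] [Fintype b] (A : Matrix a a ℂ) (B : Matrix b b ℂ) :
    (A ⊗ₖ B)ᴴ = Aᴴ ⊗ₖ Bᴴ := by
  ext ⟨i, j⟩ ⟨k, l⟩
  simp [conjTranspose_apply, star_mul']

lemma psd_neg_psd_eq_zero {r : Type*} [Fintype r] [DecidableEq r] {X : Matrix r r ℂ}
    (h1 : X.PosSemidef) (h2 : (-X).PosSemidef) : X = 0 := by
  have h : ∀ x : r → ℂ, X *ᵥ x = 0 := by
    intro x
    have a := h1.dotProduct_mulVec_nonneg x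
    have b := h2.dotProduct_mulVec_nonneg x
    rw [neg_mulVec, dotProduct_neg] at b
    exact (h1.dotProduct_mulVec_zero_iff x).mp (le_antisymm (neg_nonneg.mp b) a)
  ext i j
  have := congr_fun (h (Pi.single j 1)) i
  simpa [mulVec_single] using this

lemma exists_pinv {r : Type*} [Fintype r] [DecidableEq r] {A : Matrix r r ℂ}
    (hA : A.IsHermitian) :
    ∃ Ap Pr : Matrix r r ℂ, Ap.IsHermitian ∧ Pr.PosSemidef ∧ (1 - Pr).PosSemidef ∧
      Pr * Pr = Pr ∧ A * Ap = Pr ∧ Ap * A = Pr ∧ A * Pr = A ∧ Pr * A = A := by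
  classical
  set V : Matrix r r ℂ := (hA.eigenvectorUnitary : Matrix r r ℂ) with hV
  have h1 : V * star V = 1 := mem_unitaryGroup_iff.mp (hA.eigenvectorUnitary).2
  have h2 : star V * V = 1 := mem_unitaryGroup_iff'.mp (hA.eigenvectorUnitary).2
  set μ := hA.eigenvalues with hμ
  set d : r → ℂ := fun i => (μ i : ℂ) with hd
  set dp : r → ℂ := fun i => if μ i = 0 then 0 else (μ i : ℂ)⁻¹ with hdp
  set dind : r → ℂ := fun i => if μ i = 0 then 0 else 1 with hdind
  have hspec : A = V * diagonal d * star V := hA.spectral_theorem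
  have key : ∀ a b : r → ℂ, (V * diagonal a * star V) * (V * diagonal b * star V)
      = V * diagonal (a * b) * star V := by
    intro a b
    calc (V * diagonal a * star V) * (V * diagonal b * star V)
        = V * (diagonal a * ((star V * V) * (diagonal b * star V))) := by
          simp only [Matrix.mul_assoc]
      _ = V * diagonal (a * b) * star V := by
          rw [h2, one_mul, ← Matrix.mul_assoc (diagonal a), diagonal_mul_diagonal,
            ← Matrix.mul_assoc]
          rfl
  have hdd : d * dp = dind := by
    funext i
    by_cases h : μ i = 0 <;>
      simp [hd, hdp, hdind, h, Pi.mul_apply]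
  have hdd' : dp * d = dind := by
    funext i
    by_cases h : μ i = 0 <;>
      simp [hd, hdp, hdind, h, Pi.mul_apply]
  have hii : dind * dind = dind := by
    funext i
    by_cases h : μ i = 0 <;> simp [hdind, h, Pi.mul_apply]
  have hdi : d * dind = d := by
    funext i
    by_cases h : μ i = 0 <;> simp [hd, hdind, h, Pi.mul_apply]
  have hid : dind * d = d := by
    funext i
    by_cases h : μ i = 0 <;> simp [hd, hdind, h, Pi.mul_apply]
  refine ⟨V * diagonal dp * star V, V * diagonal dind * star V, ?_, ?_, ?_, ?_, ?_, ?_, ?_, ?_⟩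
  · -- Ap Hermitian
    show (V * diagonal dp * star V)ᴴ = V * diagonal dp * star V
    have hstar : star dp = dp := by
      funext i
      by_cases h : μ i = 0 <;>
        simp [hdp, h, Pi.star_apply, ← Complex.ofReal_inv, Complex.conj_ofReal]
    have hds : star (diagonal dp) = diagonal dp := by
      rw [star_eq_conjTranspose, diagonal_conjTranspose, hstar]
    rw [← star_eq_conjTranspose, StarMul.star_mul, StarMul.star_mul, star_star, hds, ← Matrix.mul_assoc]
  · -- Pr PSD
    have hpsd : (diagonal dind).PosSemidef := by
      refine PosSemidef.diagonal fun i => ?_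
      by_cases h : μ i = 0 <;> simp [hdind, h]
    have := hpsd.mul_mul_conjTranspose_same V
    rwa [← star_eq_conjTranspose] at this
  · -- 1 - Pr PSD
    have heq : (1 : Matrix r r ℂ) - V * diagonal dind * star V
        = V * diagonal ((1 : r → ℂ) - dind) * star V := by
      have hh : diagonal ((1 : r → ℂ) - dind) = 1 - diagonal dind := by
        rw [← diagonal_one (n := r) (α := ℂ), diagonal_sub]
        rfl
      rw [hh, Matrix.mul_sub, Matrix.mul_one, Matrix.sub_mul, h1]
    rw [heq]
    have hpsd : (diagonal ((1 : r → ℂ) - dind)).PosSemidef := by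
      refine PosSemidef.diagonal fun i => ?_
      by_cases h : μ i = 0 <;> simp [hdind, h, Pi.sub_apply]
    have := hpsd.mul_mul_conjTranspose_same V
    rwa [← star_eq_conjTranspose] at this
  · rw [key, hii]
  · rw [hspec, key, hdd]
  · rw [hspec, key, hdd']
  · rw [hspec, key, hdi]
  · rw [hspec, key, hid]


/-- Equality of the feasible sets for the channel-distance SDP. -/
theorem channel_sdp_feasible_sets_eq {n m : ℕ} :
    {R : Matrix (Fin m × Fin n) (Fin m × Fin n) ℂ | R.PosSemidef ∧
        ∃ ρ : Matrix (Fin n) (Fin n) ℂ, ρ.PosSemidef ∧ ρ.trace = 1 ∧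
          (((1 : Matrix (Fin m) (Fin m) ℂ) ⊗ₖ ρ) - R).PosSemidef} =
    {W : Matrix (Fin m × Fin n) (Fin m × Fin n) ℂ |
        ∃ (B : Matrix (Fin n) (Fin n) ℂ) (P : Matrix (Fin m × Fin n) (Fin m × Fin n) ℂ),
          frobeniusNorm B = 1 ∧ P.PosSemidef ∧
          ((1 : Matrix (Fin m × Fin n) (Fin m × Fin n) ℂ) - P).PosSemidef ∧
          W = ((1 : Matrix (Fin m) (Fin m) ℂ) ⊗ₖ Bᴴ) * P *
            ((1 : Matrix (Fin m) (Fin m) ℂ) ⊗ₖ B)} := by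
  ext R
  simp only [Set.mem_setOf_eq]
  constructor
  · rintro ⟨hR, ρ, hρ, hτ, hle⟩
    set B := hρ.sqrt with hBdef
    have hBpsd : B.PosSemidef := hρ.posSemidef_sqrt
    have hBH : Bᴴ = B := hBpsd.1
    have hBB : B * B = ρ := hρ.sqrt_mul_self
    set A : Matrix (Fin m × Fin n) (Fin m × Fin n) ℂ := (1 : Matrix (Fin m) (Fin m) ℂ) ⊗ₖ B
      with hAdef
    have hAH : A.IsHermitian := by
      show Aᴴ = A
      rw [hAdef, kron_conjT, conjTranspose_one, hBH]
    have hA2 : A * A = (1 : Matrix (Fin m) (Fin m) ℂ) ⊗ₖ ρ := by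
      rw [hAdef, ← mul_kronecker_mul, one_mul, hBB]
    obtain ⟨Ap, Pr, hApH, hPrpsd, hPrle1, hPrPr, hAAp, hApA, hAPr, hPrA⟩ := exists_pinv hAH
    refine ⟨B, Ap * R * Ap, ?_, ?_, ?_, ?_⟩
    · -- Frobenius norm of B is 1
      rw [frobeniusNorm, hBH, hBB, hτ]
      simp
    · -- P PSD
      have := hR.mul_mul_conjTranspose_same Ap
      rwa [hApH.eq] at this
    · -- 1 - P PSD
      have h1 : Ap * (A * A) * Ap = Pr := by
        calc Ap * (A * A) * Ap = (Ap * A) * (A * Ap) := by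
              simp only [Matrix.mul_assoc]
          _ = Pr := by rw [hApA, hAAp, hPrPr]
      have hsub : Ap * (((1 : Matrix (Fin m) (Fin m) ℂ) ⊗ₖ ρ) - R) * Ap
          = Pr - Ap * R * Ap := by
        rw [← hA2, Matrix.mul_sub, Matrix.sub_mul, h1]
      have hPP : (Pr - Ap * R * Ap).PosSemidef := by
        have := hle.mul_mul_conjTranspose_same Ap
        rw [hApH.eq] at this
        rwa [hsub] at this
      have := hPrle1.add hPP
      rwa [sub_add_sub_cancel] at this
    · -- R = Aᴴ P A
      obtain ⟨M, hM⟩ : ∃ M, M = (1 : Matrix (Fin m × Fin n) (Fin m × Fin n) ℂ) - Pr := ⟨_, rfl⟩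
      have hAM : A * M = 0 := by rw [hM, Matrix.mul_sub, Matrix.mul_one, hAPr, sub_self]
      obtain ⟨X, hX⟩ : ∃ X, X = hR.sqrt * M := ⟨_, rfl⟩
      have hXX : Xᴴ * X = Mᴴ * R * M := by
        rw [hX, conjTranspose_mul, hR.posSemidef_sqrt.1.eq]
        calc Mᴴ * hR.sqrt * (hR.sqrt * M) = Mᴴ * (hR.sqrt * hR.sqrt) * M := by
              simp only [Matrix.mul_assoc]
          _ = Mᴴ * R * M := by rw [hR.sqrt_mul_self]
      have hMA2M : Mᴴ * (A * A) * M = 0 := by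
        calc Mᴴ * (A * A) * M = Mᴴ * A * (A * M) := by simp only [Matrix.mul_assoc]
          _ = 0 := by rw [hAM, Matrix.mul_zero]
      have hneg : (-(Xᴴ * X)).PosSemidef := by
        have hc := hle.conjTranspose_mul_mul_same M
        have heq : Mᴴ * (((1 : Matrix (Fin m) (Fin m) ℂ) ⊗ₖ ρ) - R) * M = -(Xᴴ * X) := by
          rw [← hA2, Matrix.mul_sub, Matrix.sub_mul, hMA2M, ← hXX, zero_sub]
        rwa [heq] at hc
      have hX0 : X = 0 := by
        have := psd_neg_psd_eq_zero (posSemidef_conjTranspose_mul_self X) hneg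
        exact conjTranspose_mul_self_eq_zero.mp this
      have hRM : R * M = 0 := by
        calc R * M = hR.sqrt * (hR.sqrt * M) := by
              rw [← Matrix.mul_assoc, hR.sqrt_mul_self]
          _ = 0 := by rw [← hX, hX0, Matrix.mul_zero]
      have hRPr : R * Pr = R := by
        have h0 : R * ((1 : Matrix (Fin m × Fin n) (Fin m × Fin n) ℂ) - Pr) = 0 := by
          rw [← hM]; exact hRM
        rw [Matrix.mul_sub, Matrix.mul_one, sub_eq_zero] at h0
        exact h0.symm
      have hPrR : Pr * R = R := by
        have hc := congrArg conjTranspose hRPr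
        rwa [conjTranspose_mul, hPrpsd.1.eq, hR.1.eq] at hc
      have hfin : R = A * (Ap * R * Ap) * A := by
        calc R = Pr * R * Pr := by rw [hPrR, hRPr]
          _ = (A * Ap) * R * (Ap * A) := by rw [hAAp, hApA]
          _ = A * (Ap * R * Ap) * A := by simp only [Matrix.mul_assoc]
      have hBHB : ((1 : Matrix (Fin m) (Fin m) ℂ) ⊗ₖ Bᴴ) = A := by rw [hBH, hAdef]
      rw [hBHB, ← hAdef]
      exact hfin
  · rintro ⟨B, P, hB, hP, hP1, rfl⟩
    set N : Matrix (Fin m × Fin n) (Fin m × Fin n) ℂ := (1 : Matrix (Fin m) (Fin m) ℂ) ⊗ₖ B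
      with hN
    have hNH : Nᴴ = (1 : Matrix (Fin m) (Fin m) ℂ) ⊗ₖ Bᴴ := by
      rw [hN, kron_conjT, conjTranspose_one]
    have hNN : Nᴴ * N = (1 : Matrix (Fin m) (Fin m) ℂ) ⊗ₖ (Bᴴ * B) := by
      rw [hNH, hN, ← mul_kronecker_mul, one_mul]
    have hρ : (Bᴴ * B).PosSemidef := posSemidef_conjTranspose_mul_self B
    have htr : (Bᴴ * B).trace = 1 := by
      have him : ((Bᴴ * B).trace).im = 0 := by
        have h1 : star ((Bᴴ * B).trace) = (Bᴴ * B).trace := by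
          rw [← trace_conjTranspose, hρ.1.eq]
        have := Complex.conj_eq_iff_im.mp h1
        exact this
      have hre : ((Bᴴ * B).trace).re = 1 := by
        rw [frobeniusNorm] at hB
        exact Real.sqrt_eq_one.mp hB
      exact Complex.ext (by simp [hre]) (by simp [him])
    refine ⟨?_, Bᴴ * B, hρ, htr, ?_⟩
    · have hW := hP.conjTranspose_mul_mul_same N
      rwa [hNH] at hW
    · have hW := hP1.conjTranspose_mul_mul_same N
      rw [Matrix.mul_sub, Matrix.sub_mul, Matrix.mul_one, hNN, hNH] at hW
      exact hW
end
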